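/- Let n ≥ 3 be a natural number. For x = (x₁,…,x_n) ∈ ℝⁿ put S = Σ_{j=1}^{n} x_j and define ϖ_ℓ(x) = (n+1)·x_ℓ² − 2·x_ℓ·S for 1 ≤ ℓ ≤ n. Define the form 𝒬(x) = x₁^{n−2} · Π_{2 ≤ i < j ≤ n} (x_i − x_j). Then Σ_{ℓ=1}^{n} (∂𝒬/∂x_ℓ)(x) · ϖ_ℓ(x) = 0 for all x ∈ ℝⁿ; that is, 𝒬 is a polynomial first integral of the vector field (ϖ₁,…,ϖ_n). -/

import Mathlib

open scoped BigOperators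

set_option maxHeartbeats 1600000 in
/-- the form `𝒬 = x₁^{n−2}·∏_{2≤i<j≤n}(xᵢ−xⱼ)` is a polynomial first
integral of the vector field `ϖ_ℓ = (n+1)x_ℓ² − 2x_ℓ·Σⱼxⱼ` of the superflow
`φ_{S_{n+1}}` (indices written 0-based: `x₁ = x 0`, `2 ≤ i < j ≤ n` becomes
`p.1 ≠ 0 ∧ p.2 ≠ 0 ∧ p.1 < p.2`). -/
theorem stmt_14 (n : ℕ) (hn : 3 ≤ n)
    (ϖ : Fin n → (Fin n → ℝ) → ℝ)
    (hϖ : ∀ (ℓ : Fin n) (x : Fin n → ℝ),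
      ϖ ℓ x = (n + 1) * (x ℓ) ^ 2 - 2 * x ℓ * ∑ j, x j)
    (Q : (Fin n → ℝ) → ℝ)
    (hQ : ∀ x : Fin n → ℝ,
      Q x = (x ⟨0, by omega⟩) ^ (n - 2) *
        ∏ p ∈ Finset.univ.filter
          (fun p : Fin n × Fin n =>
            p.1 ≠ ⟨0, by omega⟩ ∧ p.2 ≠ ⟨0, by omega⟩ ∧ p.1 < p.2),
          (x p.1 - x p.2)) :
    ∀ x : Fin n → ℝ, ∑ ℓ, fderiv ℝ Q x (Pi.single ℓ 1) * ϖ ℓ x = 0 := by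
  obtain ⟨m, rfl⟩ : ∃ m, n = m + 3 := ⟨n - 3, by omega⟩
  intro x
  classical
  set z : Fin (m + 3) := ⟨0, by omega⟩ with hzdef
  set P : Finset (Fin (m + 3) × Fin (m + 3)) :=
    Finset.univ.filter
      (fun p : Fin (m + 3) × Fin (m + 3) => p.1 ≠ z ∧ p.2 ≠ z ∧ p.1 < p.2) with hPdef
  have hQfun : Q = fun y : Fin (m + 3) → ℝ =>
      y z ^ (m + 1) * ∏ p ∈ P, (y p.1 - y p.2) := funext hQ
  -- ### Step 1: the directional derivatives of Q
  have hproj : ∀ i : Fin (m + 3), HasFDerivAt (fun y : Fin (m + 3) → ℝ => y i)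
      (ContinuousLinearMap.proj i : (Fin (m + 3) → ℝ) →L[ℝ] ℝ) x :=
    fun i => by exact (ContinuousLinearMap.proj i :
      (Fin (m + 3) → ℝ) →L[ℝ] ℝ).hasFDerivAt
  have hprod : HasFDerivAt (fun y : Fin (m + 3) → ℝ => ∏ p ∈ P, (y p.1 - y p.2))
      (∑ p ∈ P, (∏ q ∈ P.erase p, (x q.1 - x q.2)) •
        (ContinuousLinearMap.proj p.1 - ContinuousLinearMap.proj p.2)) x :=
    HasFDerivAt.finset_prod (fun p _ => (hproj p.1).sub (hproj p.2))
  have hpow : HasFDerivAt (fun y : Fin (m + 3) → ℝ => y z ^ (m + 1))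
      ((((m + 1 : ℕ) : ℝ) * x z ^ m) • (ContinuousLinearMap.proj z :
        (Fin (m + 3) → ℝ) →L[ℝ] ℝ)) x :=
    by exact (hasDerivAt_pow (m + 1) (x z)).comp_hasFDerivAt x (hproj z)
  have hQd : HasFDerivAt Q
      (x z ^ (m + 1) • (∑ p ∈ P, (∏ q ∈ P.erase p, (x q.1 - x q.2)) •
          ((ContinuousLinearMap.proj p.1 : (Fin (m + 3) → ℝ) →L[ℝ] ℝ)
            - ContinuousLinearMap.proj p.2))
        + (∏ p ∈ P, (x p.1 - x p.2)) •
            ((((m + 1 : ℕ) : ℝ) * x z ^ m) • (ContinuousLinearMap.proj z :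
              (Fin (m + 3) → ℝ) →L[ℝ] ℝ))) x := by
    rw [hQfun]; exact hpow.mul hprod
  have hder : ∀ ℓ, fderiv ℝ Q x (Pi.single ℓ 1)
      = x z ^ (m + 1) *
          ∑ p ∈ P, (∏ q ∈ P.erase p, (x q.1 - x q.2)) *
            ((if p.1 = ℓ then (1:ℝ) else 0) - (if p.2 = ℓ then 1 else 0))
        + (∏ p ∈ P, (x p.1 - x p.2)) *
            (((m + 1 : ℕ) : ℝ) * x z ^ m * (if z = ℓ then 1 else 0)) := by
    intro ℓ
    rw [hQd.fderiv]
    simp only [ContinuousLinearMap.add_apply, ContinuousLinearMap.smul_apply,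
      ContinuousLinearMap.coe_sum', Finset.sum_apply, ContinuousLinearMap.sub_apply,
      ContinuousLinearMap.proj_apply, smul_eq_mul, Pi.single_apply, Finset.mul_sum]
  -- ### Step 2: combinatorial facts about P
  set U : Finset (Fin (m + 3)) := Finset.univ.erase z with hUdef
  have hUcard : U.card = m + 2 := by
    rw [hUdef, Finset.card_erase_of_mem (Finset.mem_univ z), Finset.card_univ,
      Fintype.card_fin]
    omega
  set PP : Finset (Fin (m + 3) × Fin (m + 3)) :=
    Finset.univ.filter
      (fun p : Fin (m + 3) × Fin (m + 3) => p.1 ≠ z ∧ p.2 ≠ z ∧ p.1 ≠ p.2) with hPPdef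
  have hPPsum : ∀ F : Fin (m + 3) × Fin (m + 3) → ℝ,
      ∑ p ∈ PP, F p = ∑ i ∈ U, ∑ j ∈ U.erase i, F (i, j) := by
    intro F
    rw [hPPdef, Finset.sum_filter, ← Finset.univ_product_univ, Finset.sum_product]
    have h1 : ∀ i : Fin (m + 3),
        (∑ j, if i ≠ z ∧ j ≠ z ∧ i ≠ j then F (i, j) else 0)
          = if i ∈ U then ∑ j ∈ U.erase i, F (i, j) else 0 := by
      intro i
      by_cases hi : i = z
      · simp [hi, hUdef]
      · rw [if_pos (by simp [hUdef, hi])]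
        have he : U.erase i = Finset.univ.filter (fun j => i ≠ z ∧ j ≠ z ∧ i ≠ j) := by
          ext j
          simp only [hUdef, Finset.mem_erase, Finset.mem_filter, Finset.mem_univ,
            true_and, and_true]
          tauto
        rw [he, Finset.sum_filter]
    rw [Finset.sum_congr rfl (fun i _ => h1 i), Finset.sum_ite_mem,
      Finset.univ_inter]
  set P' : Finset (Fin (m + 3) × Fin (m + 3)) :=
    P.map (Equiv.prodComm (Fin (m + 3)) (Fin (m + 3))).toEmbedding with hP'def
  have hP'mem : ∀ p : Fin (m + 3) × Fin (m + 3),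
      p ∈ P' ↔ (p.1 ≠ z ∧ p.2 ≠ z ∧ p.2 < p.1) := by
    intro p
    rw [hP'def, Finset.mem_map_equiv, hPdef]
    simp only [Finset.mem_filter, Finset.mem_univ, true_and, Equiv.prodComm_symm,
      Equiv.prodComm_apply, Prod.fst_swap, Prod.snd_swap]
    tauto
  have hdisj : Disjoint P P' := by
    rw [Finset.disjoint_left]
    intro p hp hp'
    rw [hP'mem] at hp'
    rw [hPdef, Finset.mem_filter] at hp
    exact absurd hp'.2.2 (not_lt.2 (le_of_lt hp.2.2.2))
  have hunion : P ∪ P' = PP := by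
    ext p
    rw [Finset.mem_union, hP'mem, hPdef, hPPdef]
    simp only [Finset.mem_filter, Finset.mem_univ, true_and]
    constructor
    · rintro (⟨h1, h2, h3⟩ | ⟨h1, h2, h3⟩)
      · exact ⟨h1, h2, ne_of_lt h3⟩
      · exact ⟨h1, h2, (ne_of_lt h3).symm⟩
    · rintro ⟨h1, h2, h3⟩
      rcases lt_or_gt_of_ne h3 with h | h
      · exact Or.inl ⟨h1, h2, h⟩
      · exact Or.inr ⟨h1, h2, h⟩
  have hcards : P.card + P.card = PP.card := by
    rw [← hunion, Finset.card_union_of_disjoint hdisj, hP'def, Finset.card_map]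
  have hPPcardR : (PP.card : ℝ) = (m + 2) * (m + 1) := by
    have h0 : ((PP.card : ℝ)) = ∑ p ∈ PP, (1 : ℝ) := by
      rw [Finset.sum_const, nsmul_eq_mul, mul_one]
    rw [h0, hPPsum fun _ => (1 : ℝ)]
    have h2 : ∀ i ∈ U, ∑ _j ∈ U.erase i, (1 : ℝ) = (m + 1 : ℝ) := by
      intro i hi
      rw [Finset.sum_const, Finset.card_erase_of_mem hi, hUcard, nsmul_eq_mul, mul_one]
      norm_num
    rw [Finset.sum_congr rfl h2, Finset.sum_const, hUcard, nsmul_eq_mul]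
    push_cast
    ring
  have hUsum : ∑ j ∈ U, x j = (∑ j, x j) - x z := by
    rw [hUdef, Finset.sum_erase_eq_sub (Finset.mem_univ z)]
  have hPPsumx : ∑ p ∈ PP, (x p.1 + x p.2)
      = 2 * ((m + 1 : ℝ) * ((∑ j, x j) - x z)) := by
    rw [hPPsum]
    have h2 : ∀ i ∈ U, ∑ j ∈ U.erase i, (x i + x j)
        = (m + 1 : ℝ) * x i + ((∑ j, x j) - x z - x i) := by
      intro i hi
      rw [Finset.sum_add_distrib, Finset.sum_const, Finset.card_erase_of_mem hi, hUcard,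
        Finset.sum_erase_eq_sub hi, hUsum, nsmul_eq_mul]
      push_cast
      ring
    rw [Finset.sum_congr rfl h2]
    simp only [Finset.sum_add_distrib, Finset.sum_sub_distrib, ← Finset.mul_sum,
      Finset.sum_const, hUcard, hUsum, nsmul_eq_mul]
    push_cast
    ring
  have hswap : ∑ p ∈ P', (x p.1 + x p.2) = ∑ p ∈ P, (x p.2 + x p.1) := by
    rw [hP'def, Finset.sum_map]
    apply Finset.sum_congr rfl
    intro p _
    simp
  have hsum2 : ∑ p ∈ P, (x p.1 + x p.2) + ∑ p ∈ P', (x p.1 + x p.2)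
      = ∑ p ∈ PP, (x p.1 + x p.2) := by
    rw [← hunion, Finset.sum_union hdisj]
  have hswap2 : ∑ p ∈ P, (x p.2 + x p.1) = ∑ p ∈ P, (x p.1 + x p.2) :=
    Finset.sum_congr rfl fun p _ => add_comm _ _
  have hcardR : (P.card : ℝ) * 2 = (m + 2) * (m + 1) := by
    have hc : ((P.card : ℝ) + P.card) = (PP.card : ℝ) := by exact_mod_cast hcards
    linarith [hPPcardR, hc]
  have hsumP : ∑ p ∈ P, (x p.1 + x p.2) = (m + 1 : ℝ) * ((∑ j, x j) - x z) := by
    rw [hswap, hswap2] at hsum2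
    rw [hPPsumx] at hsum2
    linarith
  -- ### Step 3: assembling the sum
  have inner : ∀ p : Fin (m + 3) × Fin (m + 3),
      ∑ ℓ, ((if p.1 = ℓ then (1:ℝ) else 0) - (if p.2 = ℓ then 1 else 0)) * ϖ ℓ x
        = ϖ p.1 x - ϖ p.2 x := by
    intro p
    simp [sub_mul, ite_mul, Finset.sum_sub_distrib, Finset.sum_ite_eq]
  have hzsum : ∑ ℓ, (if z = ℓ then (1:ℝ) else 0) * ϖ ℓ x = ϖ z x := by
    simp [ite_mul, Finset.sum_ite_eq]
  calc ∑ ℓ, fderiv ℝ Q x (Pi.single ℓ 1) * ϖ ℓ x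
      = ∑ ℓ, (∑ p ∈ P, x z ^ (m + 1) * ((∏ q ∈ P.erase p, (x q.1 - x q.2)) *
            (((if p.1 = ℓ then (1:ℝ) else 0) - (if p.2 = ℓ then 1 else 0)) * ϖ ℓ x))
          + (∏ p ∈ P, (x p.1 - x p.2)) * (((m + 1 : ℕ) : ℝ) * (x z ^ m *
            ((if z = ℓ then (1:ℝ) else 0) * ϖ ℓ x)))) := by
        refine Finset.sum_congr rfl fun ℓ _ => ?_
        rw [hder ℓ, add_mul, Finset.mul_sum, Finset.sum_mul]
        congr 1
        · refine Finset.sum_congr rfl fun p _ => by ring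
        · ring
    _ = ∑ p ∈ P, x z ^ (m + 1) * ((∏ q ∈ P.erase p, (x q.1 - x q.2)) *
            (ϖ p.1 x - ϖ p.2 x))
        + (∏ p ∈ P, (x p.1 - x p.2)) * (((m + 1 : ℕ) : ℝ) * (x z ^ m * ϖ z x)) := by
        rw [Finset.sum_add_distrib, Finset.sum_comm]
        congr 1
        · refine Finset.sum_congr rfl fun p _ => ?_
          rw [← Finset.mul_sum, ← Finset.mul_sum, inner p]
        · rw [← Finset.mul_sum, ← Finset.mul_sum, ← Finset.mul_sum, hzsum]
    _ = ∑ p ∈ P, x z ^ (m + 1) * ((∏ q ∈ P, (x q.1 - x q.2)) *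
            ((((m + 3 : ℕ) : ℝ) + 1) * (x p.1 + x p.2) - 2 * ∑ j, x j))
        + (∏ p ∈ P, (x p.1 - x p.2)) * (((m + 1 : ℕ) : ℝ) * (x z ^ m * ϖ z x)) := by
        congr 1
        refine Finset.sum_congr rfl fun p hp => ?_
        have h1 : (x p.1 - x p.2) * ∏ q ∈ P.erase p, (x q.1 - x q.2)
            = ∏ q ∈ P, (x q.1 - x q.2) :=
          Finset.mul_prod_erase P (fun q => x q.1 - x q.2) hp
        rw [hϖ p.1 x, hϖ p.2 x]
        push_cast
        push_cast at h1
        linear_combination (x z ^ (m + 1) * ((((m : ℝ) + 3) + 1) * (x p.1 + x p.2)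
          - 2 * ∑ j, x j)) * h1
    _ = 0 := by
        rw [← Finset.mul_sum, ← Finset.mul_sum, Finset.sum_sub_distrib, ← Finset.mul_sum,
          hsumP, Finset.sum_const, nsmul_eq_mul, hϖ z x]
        push_cast
        linear_combination (-(x z ^ (m + 1) * (∏ q ∈ P, (x q.1 - x q.2)) *
          (∑ j, x j))) * hcardR
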